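/- If ↣ is a static dynamic policy (α ⊨ u ↣ v iff ε ⊨ u ↣ v for all α), then for any system M the following are equivalent: M is ta^◇-secure with respect to ↣; M is ta^□-secure with respect to ↣; M is TA-secure with respect to the static relation π₁,₃(↣). -/
import Mathlib


open Classical

/-- Binary trees over actions, values of the `ta` purge functions. -/
inductive TATree (A : Type) : Type where
  | eps : TATree A
  | node : TATree A → TATree A → A → TATree A

/-- Run a deterministic system along a trace (newest action at the head of the list). -/
def runL {S A : Type} (step : S → A → S) (s0 : S) : List A → S
  | [] => s0
  | a :: α => step (runL step s0 α) a

/-- The permissive purge function `ta^◇` for a dynamic policy `P`. -/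
noncomputable def taD {D A : Type} (dm : A → D) (P : List A → D → D → Prop) :
    List A → D → TATree A
  | [], _ => TATree.eps
  | a :: α, u =>
    if P α (dm a) u then TATree.node (taD dm P α u) (taD dm P α (dm a)) a
    else taD dm P α u

/-- The unwinding relations: smallest family of equivalence relations on traces
satisfying WSC and DLR with respect to the dynamic policy `P`. -/
inductive Unw {D A : Type} (dm : A → D) (P : List A → D → D → Prop) :
    D → List A → List A → Prop where
  | refl (u : D) (α : List A) : Unw dm P u α α
  | symm {u : D} {α β : List A} : Unw dm P u α β → Unw dm P u β α
  | trans {u : D} {α β γ : List A} : Unw dm P u α β → Unw dm P u β γ → Unw dm P u α γ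
  | dlr (u : D) (α : List A) (a : A) : ¬ P α (dm a) u → Unw dm P u (a :: α) α
  | wsc (u : D) {α β : List A} (a : A) :
      Unw dm P u α β → Unw dm P (dm a) α β → Unw dm P u (a :: α) (a :: β)

/-- The prohibitive purge function `ta^□`, whose condition is distributed knowledge
of the policy edge, interpreted over the Kripke structure given by the unwinding relations. -/
noncomputable def taB {D A : Type} (dm : A → D) (P : List A → D → D → Prop) :
    List A → D → TATree A
  | [], _ => TATree.eps
  | a :: α, u =>
    if (∀ β, Unw dm P u α β → Unw dm P (dm a) α β → P β (dm a) u) then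
      TATree.node (taB dm P α u) (taB dm P α (dm a)) a
    else taB dm P α u

/-- The purge function `ta` for a static policy `Q`. -/
noncomputable def taS {D A : Type} (dm : A → D) (Q : D → D → Prop) :
    List A → D → TATree A
  | [], _ => TATree.eps
  | a :: α, u =>
    if Q (dm a) u then TATree.node (taS dm Q α u) (taS dm Q α (dm a)) a
    else taS dm Q α u

section Aux

variable {D A : Type} (dm : A → D) (P : List A → D → D → Prop)

lemma taS_cons_pos {Q : D → D → Prop} {a : A} {α : List A} {u : D} (h : Q (dm a) u) :
    taS dm Q (a :: α) u = TATree.node (taS dm Q α u) (taS dm Q α (dm a)) a := by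
  rw [taS, if_pos h]

lemma taS_cons_neg {Q : D → D → Prop} {a : A} {α : List A} {u : D} (h : ¬ Q (dm a) u) :
    taS dm Q (a :: α) u = taS dm Q α u := by
  rw [taS, if_neg h]

variable (hstatic : ∀ (α : List A) u v, P α u v ↔ P [] u v)
include hstatic

lemma taD_eq_taS (α : List A) (u : D) :
    taD dm P α u = taS dm (fun v w => P [] v w) α u := by
  induction α generalizing u with
  | nil => rfl
  | cons a α ih =>
    rw [taD, taS]
    by_cases h : P [] (dm a) u
    · rw [if_pos ((hstatic α (dm a) u).mpr h), if_pos h, ih, ih]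
    · rw [if_neg (fun hh => h ((hstatic α (dm a) u).mp hh)), if_neg h, ih]

lemma unw_taS {u : D} {α β : List A} (h : Unw dm P u α β) :
    taS dm (fun v w => P [] v w) α u = taS dm (fun v w => P [] v w) β u := by
  induction h with
  | refl => rfl
  | symm _ ih => exact ih.symm
  | trans _ _ ih1 ih2 => exact ih1.trans ih2
  | dlr u α a h =>
    exact taS_cons_neg dm (fun hh => h ((hstatic α (dm a) u).mpr hh))
  | @wsc u α β a _ _ ih1 ih2 =>
    by_cases h : P [] (dm a) u
    · rw [taS_cons_pos dm h, taS_cons_pos dm h, ih1, ih2]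
    · rw [taS_cons_neg dm h, taS_cons_neg dm h, ih1]

lemma taS_unw : ∀ (n : ℕ) (α β : List A) (u : D), α.length + β.length ≤ n →
    taS dm (fun v w => P [] v w) α u = taS dm (fun v w => P [] v w) β u →
    Unw dm P u α β := by
  intro n
  induction n with
  | zero =>
    intro α β u hlen _
    cases α with
    | nil =>
      cases β with
      | nil => exact .refl u []
      | cons b β' => simp at hlen
    | cons a α' => simp at hlen
  | succ n ih =>
    intro α β u hlen heq
    cases α with
    | nil =>
      cases β with
      | nil => exact .refl u []
      | cons b β' =>
        by_cases hb : P [] (dm b) u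
        · rw [taS_cons_pos dm hb] at heq
          exact absurd heq (by simp [taS])
        · rw [taS_cons_neg dm hb] at heq
          have h1 : Unw dm P u [] β' := by
            apply ih [] β' u _ heq
            simpa using Nat.le_of_succ_le_succ hlen
          have h2 : Unw dm P u (b :: β') β' :=
            .dlr u β' b (fun hh => hb ((hstatic β' (dm b) u).mp hh))
          exact h1.trans h2.symm
    | cons a α' =>
      by_cases ha : P [] (dm a) u
      · cases β with
        | nil =>
          rw [taS_cons_pos dm ha] at heq
          exact absurd heq (by simp [taS])
        | cons b β' =>
          by_cases hb : P [] (dm b) u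
          · rw [taS_cons_pos dm ha, taS_cons_pos dm hb] at heq
            obtain ⟨h1, h2, h3⟩ := TATree.node.inj heq
            subst h3
            have hlen' : α'.length + β'.length ≤ n := by
              simp only [List.length_cons] at hlen; omega
            exact .wsc u a (ih α' β' u hlen' h1)
              (ih α' β' (dm a) hlen' h2)
          · rw [taS_cons_neg dm hb] at heq
            have h1 : Unw dm P u (a :: α') β' := by
              apply ih (a :: α') β' u _ heq
              simp only [List.length_cons] at hlen ⊢; omega
            have h2 : Unw dm P u (b :: β') β' :=
              .dlr u β' b (fun hh => hb ((hstatic β' (dm b) u).mp hh))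
            exact h1.trans h2.symm
      · rw [taS_cons_neg dm ha] at heq
        have h1 : Unw dm P u α' β := by
          apply ih α' β u _ heq
          simp only [List.length_cons] at hlen; omega
        have h2 : Unw dm P u (a :: α') α' :=
          .dlr u α' a (fun hh => ha ((hstatic α' (dm a) u).mp hh))
        exact h2.trans h1

lemma unw_iff_taS {u : D} {α β : List A} :
    Unw dm P u α β ↔
      taS dm (fun v w => P [] v w) α u = taS dm (fun v w => P [] v w) β u :=
  ⟨fun h => unw_taS dm P hstatic h,
   fun h => taS_unw dm P hstatic (α.length + β.length) α β u le_rfl h⟩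

end Aux

/-- for a static policy, `ta^◇`-security, `ta^□`-security and TA-security
with respect to the projected static relation are all equivalent. -/
theorem statement_11 {D A S O : Type} (dm : A → D) (P : List A → D → D → Prop)
    (hrefl : ∀ α u, P α u u)
    (hstatic : ∀ (α : List A) u v, P α u v ↔ P [] u v)
    (step : S → A → S) (s0 : S) (obs : D → S → O) :
    ((∀ u (α β : List A), taD dm P α u = taD dm P β u →
        obs u (runL step s0 α) = obs u (runL step s0 β)) ↔
      (∀ u (α β : List A), Unw dm P u α β →
        obs u (runL step s0 α) = obs u (runL step s0 β))) ∧
    ((∀ u (α β : List A), Unw dm P u α β →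
        obs u (runL step s0 α) = obs u (runL step s0 β)) ↔
      (∀ u (α β : List A),
        taS dm (fun v w => P [] v w) α u = taS dm (fun v w => P [] v w) β u →
        obs u (runL step s0 α) = obs u (runL step s0 β))) := by
  constructor
  · constructor
    · intro hsec u α β hunw
      exact hsec u α β (by
        rw [taD_eq_taS dm P hstatic, taD_eq_taS dm P hstatic]
        exact (unw_iff_taS dm P hstatic).mp hunw)
    · intro hsec u α β heq
      apply hsec u α β
      apply (unw_iff_taS dm P hstatic).mpr
      rw [← taD_eq_taS dm P hstatic, ← taD_eq_taS dm P hstatic]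
      exact heq
  · constructor
    · intro hsec u α β heq
      exact hsec u α β ((unw_iff_taS dm P hstatic).mpr heq)
    · intro hsec u α β hunw
      exact hsec u α β ((unw_iff_taS dm P hstatic).mp hunw)
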